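/- For positive integers ℓ < n and real (or complex) numbers x_1,...,x_n, the sum over set partitions π of {1,...,n} with exactly ℓ blocks of the product over blocks B of the rising factorial (sum_{b in B} x_b)^{rising (|B|-1)} equals binom(n-1, ℓ-1) times the rising factorial (x_1+...+x_n)^{rising (n-ℓ)}. -/
import Mathlib


open MvPolynomial Finset

/-- `P` is a set partition of the finset `S`: its parts are nonempty, pairwise
disjoint, and their union is `S`. -/
abbrev IsSetPartition {α : Type*} [DecidableEq α] (S : Finset α)
    (P : Finset (Finset α)) : Prop :=
  (∀ B ∈ P, B.Nonempty) ∧ (∀ B ∈ P, ∀ B' ∈ P, B ≠ B' → Disjoint B B') ∧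
    P.sup id = S

/-- The finset of all set partitions of a finset `S` in a finite type. -/
def partitionsOf {α : Type*} [Fintype α] [DecidableEq α] (S : Finset α) :
    Finset (Finset (Finset α)) :=
  Finset.univ.filter (IsSetPartition S)


/-- The rising factorial `x^(rising k) = x (x+1) ⋯ (x+k-1)`. -/
def risingFactorial (x : ℂ) (k : ℕ) : ℂ := ∏ i ∈ Finset.range k, (x + i)


section Aux

variable {α : Type*} [DecidableEq α]

/-- partitions of `S` with `ℓ` blocks -/
def pOf (S : Finset α) (ℓ : ℕ) : Finset (Finset (Finset α)) :=
  S.powerset.powerset.filter (fun P => IsSetPartition S P ∧ P.card = ℓ)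

lemma subset_of_mem_part {S : Finset α} {P : Finset (Finset α)}
    (h : IsSetPartition S P) {B : Finset α} (hB : B ∈ P) : B ⊆ S := by
  have := Finset.le_sup (f := id) hB
  rw [h.2.2] at this; exact this

lemma mem_pOf {S : Finset α} {ℓ : ℕ} {P : Finset (Finset α)} :
    P ∈ pOf S ℓ ↔ IsSetPartition S P ∧ P.card = ℓ := by
  simp only [pOf, Finset.mem_filter, Finset.mem_powerset, and_iff_right_iff_imp]
  intro h B hB
  exact Finset.mem_powerset.2 (subset_of_mem_part h.1 hB)

lemma part_sum_card {S : Finset α} {P : Finset (Finset α)}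
    (h : IsSetPartition S P) : ∑ B ∈ P, B.card = S.card := by
  have : S = P.biUnion id := by rw [← h.2.2, Finset.sup_eq_biUnion]
  rw [this, Finset.card_biUnion ?_]
  · simp
  intro B hB B' hB' hne
  exact h.2.1 B hB B' hB' hne

lemma part_card_le {S : Finset α} {P : Finset (Finset α)}
    (h : IsSetPartition S P) : P.card ≤ S.card := by
  rw [← part_sum_card h]
  calc P.card = ∑ _B ∈ P, 1 := by simp
  _ ≤ ∑ B ∈ P, B.card := Finset.sum_le_sum (fun B hB => (h.1 B hB).card_pos)

lemma exists_unique_block {S : Finset α} {P : Finset (Finset α)}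
    (h : IsSetPartition S P) {i : α} (hi : i ∈ S) :
    ∃! B, B ∈ P ∧ i ∈ B := by
  rw [← h.2.2] at hi
  obtain ⟨B, hB, hiB⟩ := Finset.mem_sup.1 hi
  refine ⟨B, ⟨hB, hiB⟩, ?_⟩
  rintro B' ⟨hB', hiB'⟩
  by_contra hne
  exact Finset.disjoint_left.1 (h.2.1 B' hB' B hB hne) hiB' hiB

/-- the block of the partition containing `i` (junk if none) -/
def blockOf (P : Finset (Finset α)) (i : α) : Finset α :=
  (P.filter (fun B => i ∈ B)).sup id

lemma blockOf_spec {S : Finset α} {P : Finset (Finset α)}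
    (h : IsSetPartition S P) {i : α} (hi : i ∈ S) :
    blockOf P i ∈ P ∧ i ∈ blockOf P i ∧ ∀ B ∈ P, i ∈ B → B = blockOf P i := by
  obtain ⟨B, ⟨hB, hiB⟩, huniq⟩ := exists_unique_block h hi
  have : P.filter (fun B => i ∈ B) = {B} := by
    apply Finset.eq_singleton_iff_unique_mem.2
    exact ⟨Finset.mem_filter.2 ⟨hB, hiB⟩, fun B' hB' => by
      have := Finset.mem_filter.1 hB'; exact huniq B' ⟨this.1, this.2⟩⟩
  have hbo : blockOf P i = B := by rw [blockOf, this]; simp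
  rw [hbo]
  exact ⟨hB, hiB, fun B' hB' hiB' => huniq B' ⟨hB', hiB'⟩⟩
lemma rf_zero (y : ℂ) : risingFactorial y 0 = 1 := by simp [risingFactorial]

lemma rf_succ (y : ℂ) (k : ℕ) :
    risingFactorial y (k+1) = y * risingFactorial (y+1) k := by
  rw [risingFactorial, Finset.prod_range_succ']
  simp only [risingFactorial]
  rw [mul_comm]
  congr 1
  · push_cast; ring
  · apply Finset.prod_congr rfl; intro j _; push_cast; ring

lemma rf_top (y : ℂ) (k : ℕ) :
    risingFactorial y (k+1) = risingFactorial y k * (y + k) := by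
  rw [risingFactorial, Finset.prod_range_succ]; rfl

lemma rf_diff (y : ℂ) (k : ℕ) :
    risingFactorial (y+1) k - risingFactorial y k
      = k * risingFactorial (y+1) (k-1) := by
  cases k with
  | zero => simp [rf_zero]
  | succ m =>
    simp only [Nat.add_sub_cancel]
    rw [rf_top (y+1) m, rf_succ y m]
    push_cast
    ring

lemma rf_zero_arg {k : ℕ} (hk : 1 ≤ k) : risingFactorial 0 k = 0 := by
  rw [risingFactorial]
  apply Finset.prod_eq_zero (i := 0) (Finset.mem_range.2 hk)
  simp
noncomputable def wt (x : α → ℂ) (P : Finset (Finset α)) : ℂ :=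
  ∏ B ∈ P, risingFactorial (∑ b ∈ B, x b) (B.card - 1)

lemma blocks_card_one {S : Finset α} {P : Finset (Finset α)}
    (h : IsSetPartition S P) (hc : P.card = S.card) :
    ∀ B ∈ P, B.card = 1 := by
  by_contra hx
  push_neg at hx
  obtain ⟨B, hB, hB1⟩ := hx
  have h2 : 2 ≤ B.card := by
    have := (h.1 B hB).card_pos; omega
  have : S.card + 1 ≤ ∑ B' ∈ P, B'.card := by
    calc S.card + 1 = P.card + 1 := by rw [hc]
    _ = (∑ _B ∈ P.erase B, 1) + 2 := by
        simp only [Finset.sum_const, smul_eq_mul, mul_one, Finset.card_erase_of_mem hB]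
        have := Finset.card_pos.2 (⟨B, hB⟩ : (P : Finset (Finset α)).Nonempty)
        omega
    _ ≤ (∑ B' ∈ P.erase B, B'.card) + B.card := by
        gcongr with B' hB'
        · exact (h.1 B' (Finset.mem_of_mem_erase hB')).card_pos
    _ = ∑ B' ∈ P, B'.card := by
        rw [← Finset.sum_erase_add P _ hB]
  rw [part_sum_card h] at this
  omega

lemma pOf_full {S : Finset α} :
    pOf S S.card = {S.image (fun a => ({a} : Finset α))} := by
  ext P
  simp only [Finset.mem_singleton, mem_pOf]
  constructor
  · rintro ⟨h, hc⟩
    have h1 := blocks_card_one h hc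
    ext B
    simp only [Finset.mem_image]
    constructor
    · intro hB
      obtain ⟨b, hb⟩ := Finset.card_eq_one.1 (h1 B hB)
      exact ⟨b, subset_of_mem_part h hB (hb ▸ Finset.mem_singleton_self b), hb.symm⟩
    · rintro ⟨a, ha, rfl⟩
      have : a ∈ P.sup id := h.2.2 ▸ ha
      obtain ⟨B, hB, haB⟩ := Finset.mem_sup.1 this
      obtain ⟨b, hb⟩ := Finset.card_eq_one.1 (h1 B hB)
      simp only [hb, id, Finset.mem_singleton] at haB
      subst haB
      rwa [← hb]
  · rintro rfl
    refine ⟨⟨?_, ?_, ?_⟩, ?_⟩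
    · rintro B hB
      obtain ⟨a, _, rfl⟩ := Finset.mem_image.1 hB
      exact ⟨a, Finset.mem_singleton_self a⟩
    · rintro B hB B' hB' hne
      obtain ⟨a, _, rfl⟩ := Finset.mem_image.1 hB
      obtain ⟨a', _, rfl⟩ := Finset.mem_image.1 hB'
      simp only [Finset.disjoint_singleton_left, Finset.mem_singleton]
      intro hq; exact hne (by rw [hq])
    · apply Finset.Subset.antisymm
      · intro a ha
        obtain ⟨B, hB, haB⟩ := Finset.mem_sup.1 ha
        obtain ⟨b, hb, rfl⟩ := Finset.mem_image.1 hB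
        simp only [id] at haB
        rw [Finset.mem_singleton] at haB
        subst haB; exact hb
      · intro a ha
        exact Finset.mem_sup.2 ⟨{a}, Finset.mem_image_of_mem _ ha, Finset.mem_singleton_self a⟩
    · rw [Finset.card_image_of_injective]
      intro a b hab
      simpa using hab

lemma sum_pOf_full (S : Finset α) (x : α → ℂ) :
    ∑ P ∈ pOf S S.card, wt x P = 1 := by
  rw [pOf_full, Finset.sum_singleton, wt]
  apply Finset.prod_eq_one
  intro B hB
  obtain ⟨a, _, rfl⟩ := Finset.mem_image.1 hB
  simp [rf_zero]
lemma blockOf_eq {S : Finset α} {P : Finset (Finset α)} (h : IsSetPartition S P)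
    {B : Finset α} (hB : B ∈ P) {i : α} (hiB : i ∈ B) : blockOf P i = B :=
  ((blockOf_spec h (subset_of_mem_part h hB hiB)).2.2 B hB hiB).symm

lemma block_card_bound {S : Finset α} {P : Finset (Finset α)}
    (h : IsSetPartition S P) {B : Finset α} (hB : B ∈ P) :
    B.card + P.card ≤ S.card + 1 := by
  have hsum := part_sum_card h
  have : B.card + ∑ B' ∈ P.erase B, B'.card = S.card := by
    rw [← hsum, Finset.add_sum_erase P _ hB]
  have h2 : P.card - 1 ≤ ∑ B' ∈ P.erase B, B'.card := by
    rw [← Finset.card_erase_of_mem hB]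
    calc (P.erase B).card = ∑ _B ∈ P.erase B, 1 := by simp
    _ ≤ _ := Finset.sum_le_sum (fun B' hB' => (h.1 B' (Finset.mem_of_mem_erase hB')).card_pos)
  have := Finset.card_pos.2 (⟨B, hB⟩ : (P : Finset (Finset α)).Nonempty)
  omega

lemma part_refine' {S B : Finset α} {P Q : Finset (Finset α)}
    (h : IsSetPartition S P) (hB : B ∈ P) (hQ : IsSetPartition B Q) :
    IsSetPartition S (P.erase B ∪ Q) ∧ Disjoint (P.erase B) Q := by
  have hQsub : ∀ C ∈ Q, C ⊆ B := fun C hC => subset_of_mem_part hQ hC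
  have hdisj : Disjoint (P.erase B) Q := by
    rw [Finset.disjoint_left]
    intro C hC hCQ
    have h1 : Disjoint C B := h.2.1 C (Finset.mem_of_mem_erase hC) B hB (Finset.ne_of_mem_erase hC)
    have h2 : C ⊆ B := hQsub C hCQ
    exact (hQ.1 C hCQ).ne_empty (Finset.eq_empty_of_forall_notMem
      (fun a ha => Finset.disjoint_left.1 h1 ha (h2 ha)))
  refine ⟨⟨?_, ?_, ?_⟩, hdisj⟩
  · intro C hC
    rcases Finset.mem_union.1 hC with h' | h'
    · exact h.1 C (Finset.mem_of_mem_erase h')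
    · exact hQ.1 C h'
  · intro C hC C' hC' hne
    rcases Finset.mem_union.1 hC with h1 | h1 <;> rcases Finset.mem_union.1 hC' with h2 | h2
    · exact h.2.1 C (Finset.mem_of_mem_erase h1) C' (Finset.mem_of_mem_erase h2) hne
    · exact Finset.disjoint_of_subset_right (hQsub C' h2)
        (h.2.1 C (Finset.mem_of_mem_erase h1) B hB (Finset.ne_of_mem_erase h1))
    · exact Finset.disjoint_of_subset_left (hQsub C h1)
        (h.2.1 B hB C' (Finset.mem_of_mem_erase h2) (Ne.symm (Finset.ne_of_mem_erase h2)))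
    · exact hQ.2.1 C h1 C' h2 hne
  · rw [Finset.sup_union, hQ.2.2]
    have : P = insert B (P.erase B) := (Finset.insert_erase hB).symm
    conv_rhs => rw [← h.2.2, this]
    rw [Finset.sup_insert]
    simp [sup_comm]

lemma part_merge {S : Finset α} {P : Finset (Finset α)} {C D : Finset α}
    (h : IsSetPartition S P) (hC : C ∈ P) (hD : D ∈ P) (hne : C ≠ D) :
    IsSetPartition S (insert (C ∪ D) ((P.erase C).erase D)) ∧
      (C ∪ D) ∉ (P.erase C).erase D ∧
      (insert (C ∪ D) ((P.erase C).erase D)).card = P.card - 1 := by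
  have hDC : D ∈ P.erase C := Finset.mem_erase.2 ⟨Ne.symm hne, hD⟩
  have hnm : (C ∪ D) ∉ (P.erase C).erase D := by
    intro hmem
    have hE := Finset.mem_of_mem_erase (Finset.mem_of_mem_erase hmem)
    have hEC : C ∪ D ≠ C := fun heq => by
      obtain ⟨d, hd⟩ := h.1 D hD
      have hdC : d ∈ C := heq ▸ Finset.mem_union_right C hd
      exact Finset.disjoint_left.1 (h.2.1 C hC D hD hne) hdC hd
    have hdisj := h.2.1 (C ∪ D) hE C hC hEC
    obtain ⟨c, hc⟩ := h.1 C hC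
    exact Finset.disjoint_left.1 hdisj (Finset.mem_union_left D hc) hc
  have hP2 : 2 ≤ P.card := Finset.one_lt_card.2 ⟨C, hC, D, hD, hne⟩
  refine ⟨⟨?_, ?_, ?_⟩, hnm, ?_⟩
  · intro E hE
    rcases Finset.mem_insert.1 hE with rfl | h'
    · obtain ⟨c, hc⟩ := h.1 C hC; exact ⟨c, Finset.mem_union_left D hc⟩
    · exact h.1 E (Finset.mem_of_mem_erase (Finset.mem_of_mem_erase h'))
  · intro E hE E' hE' hneE
    rcases Finset.mem_insert.1 hE with rfl | h1 <;> rcases Finset.mem_insert.1 hE' with rfl | h2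
    · exact absurd rfl hneE
    · have hE'P := Finset.mem_of_mem_erase (Finset.mem_of_mem_erase h2)
      have hE'C : E' ≠ C := Finset.ne_of_mem_erase (Finset.mem_of_mem_erase h2)
      have hE'D : E' ≠ D := Finset.ne_of_mem_erase h2
      exact Finset.disjoint_union_left.2
        ⟨h.2.1 C hC E' hE'P (Ne.symm hE'C), h.2.1 D hD E' hE'P (Ne.symm hE'D)⟩
    · have hEP := Finset.mem_of_mem_erase (Finset.mem_of_mem_erase h1)
      have hEC : E ≠ C := Finset.ne_of_mem_erase (Finset.mem_of_mem_erase h1)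
      have hED : E ≠ D := Finset.ne_of_mem_erase h1
      exact Finset.disjoint_union_right.2 ⟨h.2.1 E hEP C hC hEC, h.2.1 E hEP D hD hED⟩
    · exact h.2.1 E (Finset.mem_of_mem_erase (Finset.mem_of_mem_erase h1))
        E' (Finset.mem_of_mem_erase (Finset.mem_of_mem_erase h2)) hneE
  · conv_rhs => rw [← h.2.2, ← Finset.insert_erase hC, ← Finset.insert_erase hDC]
    rw [Finset.sup_insert, Finset.sup_insert, Finset.sup_insert]
    simp only [id]
    rw [← sup_assoc]
    rfl
  · rw [Finset.card_insert_of_notMem hnm, Finset.card_erase_of_mem hDC,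
      Finset.card_erase_of_mem hC]
    omega

lemma two_block {B : Finset α} {Q : Finset (Finset α)} (hQ : IsSetPartition B Q)
    (h2 : Q.card = 2) {i : α} (hi : i ∈ B) :
    B \ blockOf Q i ∈ Q ∧ blockOf Q i ≠ B \ blockOf Q i ∧
      Q = {blockOf Q i, B \ blockOf Q i} ∧ blockOf Q i ∈ Q ∧ i ∈ blockOf Q i := by
  obtain ⟨C₁, C₂, hne, rfl⟩ := Finset.card_eq_two.1 h2
  obtain ⟨hmem, hiB, _⟩ := blockOf_spec hQ hi
  have hsup : C₁ ∪ C₂ = B := by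
    have := hQ.2.2
    simpa [Finset.sup_insert, Finset.sup_singleton] using this
  have hd12 : Disjoint C₁ C₂ := hQ.2.1 C₁ (by simp) C₂ (by simp) hne
  rcases Finset.mem_insert.1 hmem with h1 | h1
  · rw [h1] at hiB ⊢
    have hc : B \ C₁ = C₂ := by rw [← hsup, Finset.union_sdiff_cancel_left hd12]
    rw [hc]
    exact ⟨by simp, hne, rfl, by simp, hiB⟩
  · rw [Finset.mem_singleton] at h1
    rw [h1] at hiB ⊢
    have hc : B \ C₂ = C₁ := by rw [← hsup, Finset.union_sdiff_cancel_right hd12]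
    rw [hc]
    exact ⟨by simp, Ne.symm hne, Finset.pair_comm C₁ C₂, by simp, hiB⟩
lemma filter_notMem_eq_erase {S : Finset α} {P : Finset (Finset α)}
    (h : IsSetPartition S P) {i : α} (hi : i ∈ S) :
    P.filter (fun C => i ∉ C) = P.erase (blockOf P i) := by
  obtain ⟨hmem, hiB, huniq⟩ := blockOf_spec h hi
  ext C
  simp only [Finset.mem_filter, Finset.mem_erase]
  constructor
  · rintro ⟨hC, hiC⟩
    exact ⟨fun he => hiC (he ▸ hiB), hC⟩
  · rintro ⟨hne, hC⟩
    exact ⟨hC, fun hiC => hne (huniq C hC hiC)⟩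

lemma sigma_step {S : Finset α} {ℓ : ℕ} (hℓ : 1 ≤ ℓ) {i : α} (hi : i ∈ S)
    (g : Finset α → ℂ) :
    ∑ P ∈ pOf S ℓ, ∑ Q ∈ pOf (blockOf P i) 2, (∏ B ∈ P.erase (blockOf P i) ∪ Q, g B)
      = (ℓ : ℂ) * ∑ P' ∈ pOf S (ℓ+1), ∏ B ∈ P', g B := by
  have hrhs : (ℓ : ℂ) * ∑ P' ∈ pOf S (ℓ+1), ∏ B ∈ P', g B
      = ∑ P' ∈ pOf S (ℓ+1), ∑ C ∈ P'.filter (fun C => i ∉ C), ∏ B ∈ P', g B := by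
    rw [Finset.mul_sum]
    apply Finset.sum_congr rfl
    intro P' hP'
    rw [Finset.sum_const]
    obtain ⟨hpart, hcard⟩ := mem_pOf.1 hP'
    rw [filter_notMem_eq_erase hpart hi,
      Finset.card_erase_of_mem (blockOf_spec hpart hi).1, hcard]
    simp
  rw [hrhs, Finset.sum_sigma', Finset.sum_sigma']
  apply Finset.sum_nbij'
    (i := fun a => ⟨a.1.erase (blockOf a.1 i) ∪ a.2, blockOf a.1 i \ blockOf a.2 i⟩)
    (j := fun b => ⟨insert (blockOf b.1 i ∪ b.2) ((b.1.erase (blockOf b.1 i)).erase b.2),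
      {blockOf b.1 i, b.2}⟩)
  · -- hi : maps into target
    rintro ⟨P, Q⟩ hPQ
    simp only [Finset.mem_sigma] at hPQ ⊢
    obtain ⟨hP, hQ⟩ := hPQ
    obtain ⟨hp, hpc⟩ := mem_pOf.1 hP
    obtain ⟨hBi, hiBi, huniq⟩ := blockOf_spec hp hi
    obtain ⟨hq, hqc⟩ := mem_pOf.1 hQ
    obtain ⟨hD, hKD, hQeq, hK, hiK⟩ := two_block hq hqc hiBi
    obtain ⟨hpart', hdisj⟩ := part_refine' hp hBi hq
    constructor
    · rw [mem_pOf]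
      refine ⟨hpart', ?_⟩
      rw [Finset.card_union_of_disjoint hdisj, Finset.card_erase_of_mem hBi, hpc, hqc]
      have : 1 ≤ ℓ := hℓ
      omega
    · rw [Finset.mem_filter]
      refine ⟨Finset.mem_union_right _ hD, ?_⟩
      intro hmem
      exact (Finset.mem_sdiff.1 hmem).2 hiK
  · -- hj : maps back
    rintro ⟨P', C⟩ hPC
    simp only [Finset.mem_sigma] at hPC ⊢
    obtain ⟨hP', hC⟩ := hPC
    obtain ⟨hp', hpc'⟩ := mem_pOf.1 hP'
    obtain ⟨hCmem, hiC⟩ := Finset.mem_filter.1 hC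
    obtain ⟨hBi', hiBi', huniq'⟩ := blockOf_spec hp' hi
    have hne : blockOf P' i ≠ C := fun he => hiC (he ▸ hiBi')
    obtain ⟨hmerge, hnm, hcard⟩ := part_merge hp' hBi' hCmem hne
    have hblock : blockOf (insert (blockOf P' i ∪ C) ((P'.erase (blockOf P' i)).erase C)) i
        = blockOf P' i ∪ C :=
      blockOf_eq hmerge (Finset.mem_insert_self _ _) (Finset.mem_union_left _ hiBi')
    constructor
    · rw [mem_pOf]
      exact ⟨hmerge, by rw [hcard, hpc', Nat.add_sub_cancel]⟩
    · rw [mem_pOf, hblock]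
      have hdCC : Disjoint (blockOf P' i) C := hp'.2.1 _ hBi' C hCmem hne
      refine ⟨⟨?_, ?_, ?_⟩, ?_⟩
      · intro B hB
        rcases Finset.mem_insert.1 hB with rfl | hB'
        · exact ⟨i, hiBi'⟩
        · rw [Finset.mem_singleton] at hB'; subst hB'
          exact hp'.1 _ hCmem
      · intro B hB B' hB' hneB
        have h1 : B = blockOf P' i ∨ B = C := by simpa using hB
        have h2 : B' = blockOf P' i ∨ B' = C := by simpa using hB'
        rcases h1 with h1 | h1 <;> rcases h2 with h2 | h2 <;> subst h1 <;> subst h2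
        · exact absurd rfl hneB
        · exact hdCC
        · exact hdCC.symm
        · exact absurd rfl hneB
      · rw [Finset.sup_insert, Finset.sup_singleton]; rfl
      · have : blockOf P' i ∉ ({C} : Finset (Finset α)) := by
          simp only [Finset.mem_singleton]
          exact hne
        rw [Finset.card_insert_of_notMem this, Finset.card_singleton]
  · -- left inverse
    rintro ⟨P, Q⟩ hPQ
    simp only [Finset.mem_sigma] at hPQ
    obtain ⟨hP, hQ⟩ := hPQ
    obtain ⟨hp, hpc⟩ := mem_pOf.1 hP
    obtain ⟨hBi, hiBi, huniq⟩ := blockOf_spec hp hi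
    obtain ⟨hq, hqc⟩ := mem_pOf.1 hQ
    obtain ⟨hD, hKD, hQeq, hK, hiK⟩ := two_block hq hqc hiBi
    obtain ⟨hpart'', hdisj⟩ := part_refine' hp hBi hq
    have hbK : blockOf (P.erase (blockOf P i) ∪ Q) i = blockOf Q i :=
      blockOf_eq hpart'' (Finset.mem_union_right _ hK) hiK
    have hKnot : blockOf Q i ∉ P.erase (blockOf P i) := Finset.disjoint_right.1 hdisj hK
    have hDnot : blockOf P i \ blockOf Q i ∉ P.erase (blockOf P i) :=
      Finset.disjoint_right.1 hdisj hD
    have hKsub : blockOf Q i ⊆ blockOf P i := subset_of_mem_part hq hK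
    have hunion : blockOf Q i ∪ (blockOf P i \ blockOf Q i) = blockOf P i :=
      Finset.union_sdiff_of_subset hKsub
    have herase : (((P.erase (blockOf P i) ∪ Q).erase (blockOf Q i)).erase
        (blockOf P i \ blockOf Q i)) = P.erase (blockOf P i) := by
      ext E
      simp only [Finset.mem_erase, Finset.mem_union]
      constructor
      · rintro ⟨h1, h2, (h3 | h3)⟩
        · exact h3
        · rw [hQeq] at h3
          rcases Finset.mem_insert.1 h3 with h4 | h4
          · exact absurd h4 h2
          · rw [Finset.mem_singleton] at h4
            exact absurd h4 h1
      · intro h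
        exact ⟨fun he => hDnot (he ▸ Finset.mem_erase.2 h), fun he => hKnot (he ▸ Finset.mem_erase.2 h), Or.inl h⟩
    refine Sigma.ext ?_ (heq_of_eq ?_)
    · show insert _ _ = P
      rw [hbK, herase, hunion, Finset.insert_erase hBi]
    · show ({_, _} : Finset (Finset α)) = Q
      rw [hbK, ← hQeq]
  · -- right inverse
    rintro ⟨P', C⟩ hPC
    simp only [Finset.mem_sigma] at hPC
    obtain ⟨hP', hC⟩ := hPC
    obtain ⟨hp', hpc'⟩ := mem_pOf.1 hP'
    obtain ⟨hCmem, hiC⟩ := Finset.mem_filter.1 hC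
    obtain ⟨hBi', hiBi', huniq'⟩ := blockOf_spec hp' hi
    have hne : blockOf P' i ≠ C := fun he => hiC (he ▸ hiBi')
    obtain ⟨hmerge, hnm, hcard⟩ := part_merge hp' hBi' hCmem hne
    have hdCC : Disjoint (blockOf P' i) C := hp'.2.1 _ hBi' C hCmem hne
    have hblock : blockOf (insert (blockOf P' i ∪ C) ((P'.erase (blockOf P' i)).erase C)) i
        = blockOf P' i ∪ C :=
      blockOf_eq hmerge (Finset.mem_insert_self _ _) (Finset.mem_union_left _ hiBi')
    have hbQ : blockOf ({blockOf P' i, C} : Finset (Finset α)) i = blockOf P' i := by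
      have hfil : ({blockOf P' i, C} : Finset (Finset α)).filter (fun B => i ∈ B)
          = {blockOf P' i} := by
        ext E
        simp only [Finset.mem_filter, Finset.mem_insert, Finset.mem_singleton]
        constructor
        · rintro ⟨h1 | h1, h2⟩
          · exact h1
          · exact absurd (h1 ▸ h2) hiC
        · rintro rfl
          exact ⟨Or.inl rfl, hiBi'⟩
      rw [blockOf, hfil, Finset.sup_singleton]; rfl
    refine Sigma.ext ?_ (heq_of_eq ?_)
    · show _ ∪ _ = P'
      rw [hblock, Finset.erase_insert hnm]
      ext E
      simp only [Finset.mem_union, Finset.mem_erase, Finset.mem_insert, Finset.mem_singleton]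
      constructor
      · rintro (⟨h1, h2, h3⟩ | h1 | h1)
        · exact h3
        · exact h1 ▸ hBi'
        · exact h1 ▸ hCmem
      · intro hE
        by_cases h1 : E = blockOf P' i
        · exact Or.inr (Or.inl h1)
        · by_cases h2 : E = C
          · exact Or.inr (Or.inr h2)
          · exact Or.inl ⟨h2, h1, hE⟩
    · show _ \ _ = C
      rw [hblock, hbQ, Finset.union_sdiff_cancel_left hdCC]
  · rintro ⟨P, Q⟩ _
    rfl
lemma sum_update_split (x : α → ℂ) (i : α) (B : Finset α) (t : ℂ) :
    ∑ b ∈ B, Function.update x i t b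
      = (∑ b ∈ B, Function.update x i 0 b) + (if i ∈ B then t else 0) := by
  by_cases hiB : i ∈ B
  · rw [if_pos hiB, Finset.sum_update_of_mem hiB, Finset.sum_update_of_mem hiB]
    ring
  · rw [if_neg hiB, add_zero]
    apply Finset.sum_congr rfl
    intro b hb
    have hbne : b ≠ i := fun he => hiB (he ▸ hb)
    rw [Function.update_of_ne hbne, Function.update_of_ne hbne]

lemma delta {S : Finset α} {ℓ : ℕ} (hℓ : 1 ≤ ℓ) {i : α} (hi : i ∈ S) (x : α → ℂ)
    (hsplit : ∀ B : Finset α, B ⊆ S → i ∈ B → B.card + ℓ ≤ S.card + 1 → ∀ y : α → ℂ,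
      ((B.card - 1 : ℕ) : ℂ) * risingFactorial (∑ b ∈ B, y b) (B.card - 2)
        = ∑ Q ∈ pOf B 2, wt y Q) :
    (∑ P ∈ pOf S ℓ, wt (Function.update x i (x i + 1)) P) - ∑ P ∈ pOf S ℓ, wt x P
      = (ℓ : ℂ) * ∑ P ∈ pOf S (ℓ+1), wt (Function.update x i (x i + 1)) P := by
  set x' := Function.update x i (x i + 1) with hx'
  rw [← Finset.sum_sub_distrib,
    show (∑ P ∈ pOf S (ℓ+1), wt x' P) = ∑ P' ∈ pOf S (ℓ+1), ∏ B ∈ P',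
      risingFactorial (∑ b ∈ B, x' b) (B.card - 1) from rfl,
    ← sigma_step hℓ hi (fun B => risingFactorial (∑ b ∈ B, x' b) (B.card - 1))]
  apply Finset.sum_congr rfl
  intro P hP
  obtain ⟨hp, hpc⟩ := mem_pOf.1 hP
  obtain ⟨hBi, hiBi, huniq⟩ := blockOf_spec hp hi
  have key1 : ∀ B ∈ P.erase (blockOf P i),
      risingFactorial (∑ b ∈ B, x b) (B.card - 1)
        = risingFactorial (∑ b ∈ B, x' b) (B.card - 1) := by
    intro B hB
    have hiB : i ∉ B := fun hiB =>
      (Finset.ne_of_mem_erase hB) (huniq B (Finset.mem_of_mem_erase hB) hiB)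
    congr 1
    apply Finset.sum_congr rfl
    intro b hb
    have hbne : b ≠ i := fun he => hiB (he ▸ hb)
    rw [hx', Function.update_of_ne hbne]
  have key2 : ∑ b ∈ blockOf P i, x' b = (∑ b ∈ blockOf P i, x b) + 1 := by
    rw [hx', Finset.sum_update_of_mem hiBi, ← Finset.add_sum_erase _ x hiBi,
      Finset.sdiff_singleton_eq_erase]
    ring
  have hsub : blockOf P i ⊆ S := subset_of_mem_part hp hBi
  have hbound : (blockOf P i).card + ℓ ≤ S.card + 1 := by
    have := block_card_bound hp hBi; rwa [hpc] at this
  have hdiff : risingFactorial (∑ b ∈ blockOf P i, x' b) ((blockOf P i).card - 1)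
      - risingFactorial (∑ b ∈ blockOf P i, x b) ((blockOf P i).card - 1)
      = ∑ Q ∈ pOf (blockOf P i) 2, wt x' Q := by
    rw [key2, rf_diff, ← key2]
    have : (blockOf P i).card - 1 - 1 = (blockOf P i).card - 2 := by omega
    rw [this]
    exact hsplit _ hsub hiBi hbound x'
  calc wt x' P - wt x P
      = (risingFactorial (∑ b ∈ blockOf P i, x' b) ((blockOf P i).card - 1)
          - risingFactorial (∑ b ∈ blockOf P i, x b) ((blockOf P i).card - 1))
        * ∏ B ∈ P.erase (blockOf P i), risingFactorial (∑ b ∈ B, x' b) (B.card - 1) := by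
        rw [wt, wt, ← Finset.mul_prod_erase _ _ hBi, ← Finset.mul_prod_erase _ _ hBi,
          Finset.prod_congr rfl key1, sub_mul]
    _ = (∑ Q ∈ pOf (blockOf P i) 2, wt x' Q)
        * ∏ B ∈ P.erase (blockOf P i), risingFactorial (∑ b ∈ B, x' b) (B.card - 1) := by
        rw [hdiff]
    _ = ∑ Q ∈ pOf (blockOf P i) 2, ∏ B ∈ P.erase (blockOf P i) ∪ Q,
          risingFactorial (∑ b ∈ B, x' b) (B.card - 1) := by
        rw [Finset.sum_mul]
        apply Finset.sum_congr rfl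
        intro Q hQ
        obtain ⟨hq, _⟩ := mem_pOf.1 hQ
        rw [Finset.prod_union (part_refine' hp hBi hq).2, wt, mul_comm]
lemma poly_periodic_const (p : Polynomial ℂ) (h : ∀ t : ℂ, p.eval (t+1) = p.eval t) :
    ∀ t : ℂ, p.eval t = p.eval 0 := by
  have hnat : ∀ n : ℕ, p.eval (n : ℂ) = p.eval 0 := by
    intro n
    induction n with
    | zero => simp
    | succ m ih => push_cast; rw [h (m : ℂ)]; exact ih
  have hq : p - Polynomial.C (p.eval 0) = 0 := by
    apply Polynomial.eq_zero_of_infinite_isRoot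
    apply Set.Infinite.mono (s := Set.range (fun n : ℕ => (n : ℂ)))
    · rintro z ⟨n, rfl⟩
      simp only [Polynomial.IsRoot, Polynomial.eval_sub, Polynomial.eval_C, Set.mem_setOf_eq]
      rw [hnat n, sub_self]
    · exact Set.infinite_range_of_injective Nat.cast_injective
  intro t
  have := congrArg (Polynomial.eval t) hq
  simpa [sub_eq_zero] using this

lemma exists_poly (S : Finset α) (ℓ : ℕ) (i : α) (x : α → ℂ) :
    ∃ p : Polynomial ℂ, ∀ t : ℂ,
      p.eval t = (∑ P ∈ pOf S ℓ, wt (Function.update x i t) P)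
        - (((S.card - 1).choose (ℓ - 1) : ℂ)
            * risingFactorial (∑ b ∈ S, Function.update x i t b) (S.card - ℓ)) := by
  refine ⟨(∑ P ∈ pOf S ℓ, ∏ B ∈ P, ∏ j ∈ Finset.range (B.card - 1),
      (Polynomial.C (∑ b ∈ B, Function.update x i 0 b)
        + (if i ∈ B then Polynomial.X else 0) + Polynomial.C (j : ℂ)))
    - Polynomial.C (((S.card - 1).choose (ℓ - 1) : ℂ))
      * ∏ j ∈ Finset.range (S.card - ℓ),
        (Polynomial.C (∑ b ∈ S, Function.update x i 0 b)
          + (if i ∈ S then Polynomial.X else 0) + Polynomial.C (j : ℂ)), ?_⟩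
  intro t
  rw [Polynomial.eval_sub, Polynomial.eval_mul, Polynomial.eval_C,
    Polynomial.eval_finset_sum]
  congr 1
  · apply Finset.sum_congr rfl
    intro P _
    rw [Polynomial.eval_prod, wt]
    apply Finset.prod_congr rfl
    intro B _
    rw [Polynomial.eval_prod, risingFactorial]
    apply Finset.prod_congr rfl
    intro j _
    rw [sum_update_split x i B t]
    simp only [Polynomial.eval_add, Polynomial.eval_C, apply_ite (Polynomial.eval t),
      Polynomial.eval_X, Polynomial.eval_zero]
  · congr 1
    rw [Polynomial.eval_prod, risingFactorial]
    apply Finset.prod_congr rfl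
    intro j _
    rw [sum_update_split x i S t]
    simp only [Polynomial.eval_add, Polynomial.eval_C, apply_ite (Polynomial.eval t),
      Polynomial.eval_X, Polynomial.eval_zero]

lemma const_in_coord (S : Finset α) (ℓ : ℕ) (i : α)
    (hper : ∀ y : α → ℂ,
      ((∑ P ∈ pOf S ℓ, wt (Function.update y i (y i + 1)) P)
        - ((S.card - 1).choose (ℓ - 1) : ℂ)
            * risingFactorial (∑ b ∈ S, Function.update y i (y i + 1) b) (S.card - ℓ))
      = (∑ P ∈ pOf S ℓ, wt y P)
        - ((S.card - 1).choose (ℓ - 1) : ℂ)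
            * risingFactorial (∑ b ∈ S, y b) (S.card - ℓ))
    (x : α → ℂ) :
    (∑ P ∈ pOf S ℓ, wt x P)
        - ((S.card - 1).choose (ℓ - 1) : ℂ)
            * risingFactorial (∑ b ∈ S, x b) (S.card - ℓ)
      = (∑ P ∈ pOf S ℓ, wt (Function.update x i 0) P)
        - ((S.card - 1).choose (ℓ - 1) : ℂ)
            * risingFactorial (∑ b ∈ S, Function.update x i 0 b) (S.card - ℓ) := by
  obtain ⟨p, hp⟩ := exists_poly S ℓ i x
  have hshift : ∀ t : ℂ, p.eval (t + 1) = p.eval t := by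
    intro t
    rw [hp, hp]
    have := hper (Function.update x i t)
    simp only [Function.update_self, Function.update_idem] at this
    exact this
  have hconst := poly_periodic_const p hshift
  have h1 : p.eval (x i) = _ := hp (x i)
  rw [Function.update_eq_self] at h1
  rw [← h1, hconst (x i), hp 0]
lemma lhs_zero_pt {S : Finset α} {ℓ : ℕ} (hlt : ℓ < S.card) {x : α → ℂ}
    (hx : ∀ j ∈ S, x j = 0) :
    ∑ P ∈ pOf S ℓ, wt x P = 0 := by
  apply Finset.sum_eq_zero
  intro P hP
  obtain ⟨hp, hpc⟩ := mem_pOf.1 hP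
  have hbig : ∃ B ∈ P, 2 ≤ B.card := by
    by_contra hc
    push_neg at hc
    have : S.card ≤ P.card := by
      rw [← part_sum_card hp]
      calc ∑ B ∈ P, B.card ≤ ∑ _B ∈ P, 1 :=
            Finset.sum_le_sum (fun B hB => by have := hc B hB; omega)
      _ = P.card := by simp
    omega
  obtain ⟨B, hB, hB2⟩ := hbig
  apply Finset.prod_eq_zero hB
  have hsum : ∑ b ∈ B, x b = 0 :=
    Finset.sum_eq_zero (fun b hb => hx b (subset_of_mem_part hp hB hb))
  rw [hsum]
  exact rf_zero_arg (by omega)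

theorem main (N : ℕ) : ∀ (S : Finset α) (ℓ : ℕ) (x : α → ℂ),
    2 * S.card - ℓ ≤ N → 1 ≤ ℓ → ℓ ≤ S.card →
    ∑ P ∈ pOf S ℓ, wt x P
      = ((S.card - 1).choose (ℓ - 1) : ℂ) * risingFactorial (∑ b ∈ S, x b) (S.card - ℓ) := by
  induction N with
  | zero => intro S ℓ x hN h1 h2; omega
  | succ N IH =>
    intro S ℓ x hN h1 h2
    rcases eq_or_lt_of_le h2 with heq | hlt
    · rw [heq, sum_pOf_full, Nat.choose_self, Nat.sub_self, rf_zero]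
      simp
    · -- split hypothesis from IH
      have hsplit : ∀ B : Finset α, B ⊆ S → B.Nonempty → B.card + ℓ ≤ S.card + 1 →
          ∀ y : α → ℂ,
          ((B.card - 1 : ℕ) : ℂ) * risingFactorial (∑ b ∈ B, y b) (B.card - 2)
            = ∑ Q ∈ pOf B 2, wt y Q := by
        intro B hBS hne hcard y
        rcases Nat.lt_or_ge B.card 2 with hlt2 | hge2
        · have hc1 : B.card = 1 := by
            have := hne.card_pos; omega
          have hempty : pOf B 2 = ∅ := by
            apply Finset.eq_empty_of_forall_notMem
            intro Q hQ
            obtain ⟨hq, hqc⟩ := mem_pOf.1 hQ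
            have := part_card_le hq
            omega
          rw [hempty, Finset.sum_empty, hc1]
          simp
        · have := IH B 2 y (by omega) (by omega) hge2
          rw [this, Nat.choose_one_right]
      -- periodicity of the difference
      have hper : ∀ i ∈ S, ∀ y : α → ℂ,
          ((∑ P ∈ pOf S ℓ, wt (Function.update y i (y i + 1)) P)
            - ((S.card - 1).choose (ℓ - 1) : ℂ)
                * risingFactorial (∑ b ∈ S, Function.update y i (y i + 1) b) (S.card - ℓ))
          = (∑ P ∈ pOf S ℓ, wt y P)
            - ((S.card - 1).choose (ℓ - 1) : ℂ)
                * risingFactorial (∑ b ∈ S, y b) (S.card - ℓ) := by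
        intro i hi y
        set y' := Function.update y i (y i + 1) with hy'
        have hdelta := delta h1 hi y (fun B hBS hiB hc z => hsplit B hBS ⟨i, hiB⟩ hc z)
        have hnext := IH S (ℓ+1) y' (by omega) (by omega) hlt
        have hsy : ∑ b ∈ S, y' b = (∑ b ∈ S, y b) + 1 := by
          rw [hy', Finset.sum_update_of_mem hi, ← Finset.add_sum_erase _ y hi,
            Finset.sdiff_singleton_eq_erase]
          ring
        have hrfdiff : risingFactorial (∑ b ∈ S, y' b) (S.card - ℓ)
            - risingFactorial (∑ b ∈ S, y b) (S.card - ℓ)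
            = ((S.card - ℓ : ℕ) : ℂ) * risingFactorial (∑ b ∈ S, y' b) (S.card - ℓ - 1) := by
          rw [hsy, rf_diff, ← hsy]
        have hchoose : ((S.card - 1).choose (ℓ - 1)) * (S.card - ℓ)
            = ℓ * ((S.card - 1).choose ℓ) := by
          have h := Nat.choose_succ_right_eq (S.card - 1) (ℓ - 1)
          have hℓ : ℓ - 1 + 1 = ℓ := by omega
          rw [hℓ] at h
          have : S.card - 1 - (ℓ - 1) = S.card - ℓ := by omega
          rw [this] at h
          rw [← h, Nat.mul_comm]
        have hsub : S.card - ℓ - 1 = S.card - (ℓ+1) := by omega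
        rw [hsub] at hrfdiff
        have hch1 : (ℓ + 1 - 1) = ℓ := by omega
        rw [← hy'] at hdelta
        rw [hnext, hch1] at hdelta
        have hcc : (((S.card - 1).choose (ℓ - 1) : ℕ) : ℂ) * ((S.card - ℓ : ℕ) : ℂ)
            = (ℓ : ℂ) * (((S.card - 1).choose ℓ : ℕ) : ℂ) := by exact_mod_cast hchoose
        linear_combination hdelta - (((S.card - 1).choose (ℓ - 1) : ℕ) : ℂ) * hrfdiff
          - risingFactorial (∑ b ∈ S, y' b) (S.card - (ℓ+1)) * hcc
      -- zero out the coordinates one at a time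
      have hconst : ∀ i ∈ S, ∀ z : α → ℂ,
          (∑ P ∈ pOf S ℓ, wt z P)
              - ((S.card - 1).choose (ℓ - 1) : ℂ)
                  * risingFactorial (∑ b ∈ S, z b) (S.card - ℓ)
            = (∑ P ∈ pOf S ℓ, wt (Function.update z i 0) P)
              - ((S.card - 1).choose (ℓ - 1) : ℂ)
                  * risingFactorial (∑ b ∈ S, Function.update z i 0 b) (S.card - ℓ) :=
        fun i hi z => const_in_coord S ℓ i (hper i hi) z
      have hT : ∀ T : Finset α, T ⊆ S → ∀ z : α → ℂ, (∀ j ∈ S, j ∉ T → z j = 0) →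
          (∑ P ∈ pOf S ℓ, wt z P)
              - ((S.card - 1).choose (ℓ - 1) : ℂ)
                  * risingFactorial (∑ b ∈ S, z b) (S.card - ℓ) = 0 := by
        intro T
        induction T using Finset.induction_on with
        | empty =>
          intro _ z hz
          have hz' : ∀ j ∈ S, z j = 0 := fun j hj => hz j hj (Finset.notMem_empty j)
          rw [lhs_zero_pt hlt hz', Finset.sum_eq_zero hz', rf_zero_arg (by omega)]
          ring
        | @insert a T ha IH2 =>
          intro hsub z hz
          rw [hconst a (hsub (Finset.mem_insert_self a T)) z]
          apply IH2 ((Finset.subset_insert a T).trans hsub)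
          intro j hj hjT
          by_cases hja : j = a
          · subst hja; simp
          · rw [Function.update_of_ne hja]
            exact hz j hj (by simp [hja, hjT])
      have := hT S (Finset.Subset.refl S) x (fun j hj hjs => absurd hj hjs)
      exact sub_eq_zero.1 this

end Aux

/- For `1 ≤ ℓ < n` and complex numbers ... -/
theorem partition_rising_factorial_identity (n ℓ : ℕ) (hℓ : 0 < ℓ) (hℓn : ℓ < n)
    (x : Fin n → ℂ) :
    ∑ P ∈ (partitionsOf (Finset.univ : Finset (Fin n))).filter
        (fun P => P.card = ℓ),
      ∏ B ∈ P, risingFactorial (∑ b ∈ B, x b) (B.card - 1) =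
      ((n - 1).choose (ℓ - 1) : ℂ) * risingFactorial (∑ i, x i) (n - ℓ) := by
  have hbridge : (partitionsOf (Finset.univ : Finset (Fin n))).filter
      (fun P => P.card = ℓ) = pOf (Finset.univ : Finset (Fin n)) ℓ := by
    ext P
    simp only [partitionsOf, pOf, Finset.mem_filter, Finset.mem_univ, true_and,
      Finset.mem_powerset]
    constructor
    · rintro ⟨h1, h2⟩
      exact ⟨fun B hB => Finset.mem_powerset.2 (Finset.subset_univ B), h1, h2⟩
    · rintro ⟨_, h1, h2⟩
      exact ⟨h1, h2⟩
  have hcard : (Finset.univ : Finset (Fin n)).card = n := by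
    rw [Finset.card_univ, Fintype.card_fin]
  have := main (2*n) (Finset.univ : Finset (Fin n)) ℓ x
    (by rw [hcard]; omega) hℓ (by rw [hcard]; omega)
  rw [hbridge]
  rw [hcard] at this
  exact this
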